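/- Let ω ∈ (0,1/2], δ ∈ (0,π], and F(N;δ,ω) = (δ²/6)∑_{m=1}^∞ [mNδ/(mNδ − sin(mNδ))](sin(mπω)/m)². Then the partial derivative ∂F/∂N is strictly positive at N = 2kπ/δ and strictly negative at N = (2k+1)π/δ for every positive integer k; in fact at N = (2k+1)π/δ, ∂F/∂N = −(δ²/(6N))·(πω)²/2. -/

import Mathlib

open Real

lemma bern2 : (bernoulli 2 : ℚ) = 1/6 := by
  rw [bernoulli_eq_bernoulli'_of_ne_one (by norm_num), bernoulli'_two]

lemma cosSum {x : ℝ} (hx : x ∈ Set.Icc (0:ℝ) 1) :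
    HasSum (fun n : ℕ => 1 / (n : ℝ) ^ 2 * Real.cos (2 * π * n * x))
      (π ^ 2 * (x ^ 2 - x + 1/6)) := by
  have h := hasSum_one_div_nat_pow_mul_cos (k := 1) one_ne_zero hx
  have hB : (Polynomial.map (algebraMap ℚ ℝ) (Polynomial.bernoulli 2)).eval x
      = x ^ 2 - x + 1/6 := by
    simp [Polynomial.bernoulli, Finset.sum_range_succ, bernoulli_zero, bernoulli_one, bern2]
    ring
  rw [hB] at h
  convert h using 2 <;> norm_num
  · ring

lemma cos_nat_pi (n : ℕ) : Real.cos (n * π) = (-1) ^ n := by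
  simpa using Real.cos_nat_mul_pi_sub 0 n

lemma keySum {ω : ℝ} (h0 : 0 < ω) (h2 : ω ≤ 1/2) :
    HasSum (fun n : ℕ => (-1 : ℝ) ^ n * Real.sin (n * π * ω) ^ 2 / (n : ℝ) ^ 2)
      (-(π * ω) ^ 2 / 2) := by
  have A := cosSum (x := 1/2) (by constructor <;> norm_num)
  have B := cosSum (x := ω + 1/2) (by constructor <;> [linarith; linarith])
  have C := (A.sub B).div_const 2
  have hfun : ∀ n : ℕ, (1 / (n : ℝ) ^ 2 * Real.cos (2 * π * n * (1/2))
      - 1 / (n : ℝ) ^ 2 * Real.cos (2 * π * n * (ω + 1/2))) / 2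
      = (-1 : ℝ) ^ n * Real.sin (n * π * ω) ^ 2 / (n : ℝ) ^ 2 := by
    intro n
    have e1 : 2 * π * (n:ℝ) * (1/2) = n * π := by ring
    have e2 : 2 * π * (n:ℝ) * (ω + 1/2) = 2 * ((n:ℝ) * π * ω) + n * π := by ring
    rw [e1, e2, Real.cos_add, cos_nat_pi, Real.sin_nat_mul_pi,
      Real.sin_sq_eq_half_sub ((n:ℝ) * π * ω)]
    ring
  have C2 : HasSum (fun n : ℕ => (-1 : ℝ) ^ n * Real.sin (n * π * ω) ^ 2 / (n : ℝ) ^ 2)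
      ((π ^ 2 * ((1/2:ℝ) ^ 2 - 1/2 + 1/6) - π ^ 2 * ((ω + 1/2) ^ 2 - (ω + 1/2) + 1/6)) / 2) := by
    exact C.congr_fun fun n => (hfun n).symm
  convert C2 using 1
  ring

lemma keySum' {ω : ℝ} (h0 : 0 < ω) (h2 : ω ≤ 1/2) :
    HasSum (fun m : ℕ => (-1 : ℝ) ^ (m+1) * (Real.sin ((m+1:ℕ) * π * ω) / ((m+1:ℕ) : ℝ)) ^ 2)
      (-(π * ω) ^ 2 / 2) := by
  have h := keySum h0 h2
  have h1 : HasSum (fun m : ℕ =>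
      (-1 : ℝ) ^ (m+1) * Real.sin ((m+1:ℝ) * π * ω) ^ 2 / ((m:ℝ)+1) ^ 2)
      (-(π * ω) ^ 2 / 2) := by
    have h' : HasSum (fun m : ℕ =>
        (-1 : ℝ) ^ (m + 1) * Real.sin ((m + 1 : ℕ) * π * ω) ^ 2 / ((m + 1 : ℕ) : ℝ) ^ 2)
        (-(π * ω) ^ 2 / 2) := by
      have h2 := (hasSum_nat_add_iff (f := fun n : ℕ =>
        (-1 : ℝ) ^ n * Real.sin (n * π * ω) ^ 2 / (n : ℝ) ^ 2) 1 (g := -(π * ω) ^ 2 / 2 + ∑ i ∈ Finset.range 1, (-1 : ℝ) ^ i * Real.sin (i * π * ω) ^ 2 / (i : ℝ) ^ 2)).2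
      simpa using h2 (by simpa using h)
    convert h' using 2 with m
    push_cast
    ring_nf
  refine h1.congr_fun fun m => ?_
  push_cast
  rw [div_pow]
  ring

lemma qDeriv {x : ℝ} (h : x - Real.sin x ≠ 0) :
    HasDerivAt (fun y : ℝ => y / (y - Real.sin y))
      ((x * Real.cos x - Real.sin x) / (x - Real.sin x) ^ 2) x := by
  have hd : HasDerivAt (fun y : ℝ => y - Real.sin y) (1 - Real.cos x) x :=
    (hasDerivAt_id x).sub (Real.hasDerivAt_sin x)
  have := (hasDerivAt_id x).div hd h
  refine this.congr_deriv ?_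
  show (1 * (x - Real.sin x) - x * (1 - Real.cos x)) / (x - Real.sin x) ^ 2 = _
  ring

lemma qBound {x : ℝ} (h : 2 ≤ x) :
    |(x * Real.cos x - Real.sin x) / (x - Real.sin x) ^ 2| ≤ 8 / x := by
  have hx0 : 0 < x := by linarith
  have hnum : |x * Real.cos x - Real.sin x| ≤ 2 * x := by
    calc |x * Real.cos x - Real.sin x| ≤ |x * Real.cos x| + |Real.sin x| := abs_sub _ _
    _ ≤ x * 1 + 1 := by
        gcongr
        · rw [abs_mul, abs_of_pos hx0]
          have := Real.abs_cos_le_one x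
          nlinarith [abs_nonneg (Real.cos x)]
        · exact Real.abs_sin_le_one x
    _ ≤ 2 * x := by linarith
  have hden : x ^ 2 / 4 ≤ (x - Real.sin x) ^ 2 := by
    have h1 : x / 2 ≤ x - Real.sin x := by
      have := Real.neg_one_le_sin x
      have := Real.sin_le_one x
      linarith
    nlinarith
  rw [abs_div, abs_of_nonneg (sq_nonneg (x - Real.sin x))]
  calc |x * Real.cos x - Real.sin x| / (x - Real.sin x) ^ 2
      ≤ (2 * x) / (x ^ 2 / 4) := by
        apply div_le_div₀ (by positivity) hnum (by positivity) hden
    _ = 8 / x := by field_simp; ring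

lemma qVal (n : ℕ) (hn : 0 < n) :
    ((n:ℝ) * π * Real.cos ((n:ℝ) * π) - Real.sin ((n:ℝ) * π)) /
      ((n:ℝ) * π - Real.sin ((n:ℝ) * π)) ^ 2 = (-1:ℝ) ^ n / ((n:ℝ) * π) := by
  rw [cos_nat_pi, Real.sin_nat_mul_pi]
  have h1 : (n:ℝ) * π ≠ 0 := by
    have : (0:ℝ) < n := by exact_mod_cast hn
    positivity
  field_simp
  ring

theorem F_deriv_signs (δ ω : ℝ) (hδ : δ ∈ Set.Ioc (0:ℝ) π)
    (hω : ω ∈ Set.Ioc (0:ℝ) (1/2))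
    (F : ℝ → ℝ)
    (hF : ∀ N : ℝ, F N = δ ^ 2 / 6 * ∑' m : ℕ,
        ((m + 1 : ℕ) * N * δ / ((m + 1 : ℕ) * N * δ - Real.sin ((m + 1 : ℕ) * N * δ))) *
          (Real.sin ((m + 1 : ℕ) * π * ω) / (m + 1 : ℕ)) ^ 2)
    (k : ℕ) (hk : 0 < k) :
    0 < deriv F (2 * k * π / δ) ∧
    deriv F ((2 * k + 1) * π / δ) =
      -(δ ^ 2 / (6 * ((2 * k + 1) * π / δ))) * (π * ω) ^ 2 / 2 ∧
    deriv F ((2 * k + 1) * π / δ) < 0 := by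
  obtain ⟨hδ0, hδπ⟩ := hδ
  obtain ⟨hω0, hω2⟩ := hω
  have hπ := Real.pi_pos
  set a : ℕ → ℝ := fun m => (Real.sin ((m + 1 : ℕ) * π * ω) / ((m + 1 : ℕ) : ℝ)) ^ 2 with ha_def
  set g : ℕ → ℝ → ℝ := fun m N =>
    ((m + 1 : ℕ) * N * δ / ((m + 1 : ℕ) * N * δ - Real.sin ((m + 1 : ℕ) * N * δ))) * a m
    with hg_def
  set g' : ℕ → ℝ → ℝ := fun m N =>
    (((m + 1 : ℕ) : ℝ) * δ) *
      ((((m + 1 : ℕ) : ℝ) * N * δ * Real.cos (((m + 1 : ℕ) : ℝ) * N * δ)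
          - Real.sin (((m + 1 : ℕ) : ℝ) * N * δ)) /
        ((((m + 1 : ℕ) : ℝ) * N * δ - Real.sin (((m + 1 : ℕ) : ℝ) * N * δ)) ^ 2)) * a m
    with hg'_def
  have hFeq : F = fun N => δ ^ 2 / 6 * ∑' m, g m N := funext hF
  -- basic facts
  have ha_nonneg : ∀ m, 0 ≤ a m := fun m => sq_nonneg _
  have ha_le : ∀ m, a m ≤ 1 / ((m:ℝ) + 1) ^ 2 := by
    intro m
    have h1 : a m = Real.sin ((m + 1 : ℕ) * π * ω) ^ 2 / ((m:ℝ) + 1) ^ 2 := by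
      simp only [ha_def, div_pow]; push_cast; ring
    rw [h1]
    gcongr
    · rw [← Real.sin_sq_add_cos_sq ((m + 1 : ℕ) * π * ω)]
      nlinarith [sq_nonneg (Real.cos ((m + 1 : ℕ) * π * ω))]
  have hsum1 : Summable (fun m : ℕ => 1 / ((m:ℝ) + 1) ^ 2) := by
    have h0 : Summable (fun n : ℕ => 1 / (n:ℝ) ^ 2) :=
      Real.summable_one_div_nat_pow.mpr one_lt_two
    exact ((summable_nat_add_iff 1).2 h0).congr fun m => by push_cast; ring
  have hsuma : Summable a :=
    Summable.of_nonneg_of_le ha_nonneg ha_le hsum1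
  -- the set
  have hmemX : ∀ (m : ℕ) (N : ℝ), N ∈ Set.Ioi (π / δ) → 2 < ((m + 1 : ℕ) : ℝ) * N * δ := by
    intro m N hN
    rw [Set.mem_Ioi] at hN
    have hN0 : 0 < N := lt_trans (by positivity) hN
    have h1 : π < N * δ := by
      rw [div_lt_iff₀ hδ0] at hN; linarith
    have h2 : (1:ℝ) ≤ ((m + 1 : ℕ) : ℝ) := by exact_mod_cast Nat.one_le_iff_ne_zero.2 (Nat.succ_ne_zero m)
    nlinarith [Real.pi_gt_three]
  have hgderiv : ∀ (m : ℕ) (N : ℝ), N ∈ Set.Ioi (π / δ) → HasDerivAt (g m) (g' m N) N := by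
    intro m N hN
    have hX := hmemX m N hN
    have hden : ((m + 1 : ℕ) : ℝ) * N * δ - Real.sin (((m + 1 : ℕ) : ℝ) * N * δ) ≠ 0 := by
      have := Real.sin_le_one (((m + 1 : ℕ) : ℝ) * N * δ)
      nlinarith
    have hlin : HasDerivAt (fun y : ℝ => ((m + 1 : ℕ) : ℝ) * y * δ) (((m + 1 : ℕ) : ℝ) * δ) N := by
      have h := ((hasDerivAt_id N).const_mul (((m + 1 : ℕ) : ℝ))).mul_const δ
      simpa using h
    have hq := qDeriv hden
    have hcomp := (hq.comp N hlin).mul_const (a m)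
    refine hcomp.congr_deriv ?_
    rw [hg'_def]
    ring
  have hbound : ∀ (m : ℕ) (N : ℝ), N ∈ Set.Ioi (π / δ) →
      ‖g' m N‖ ≤ 8 * δ / π * (1 / ((m:ℝ) + 1) ^ 2) := by
    intro m N hN
    have hX := hmemX m N hN
    have hNmem := hN
    rw [Set.mem_Ioi] at hNmem
    have hN0 : 0 < N := lt_trans (by positivity) hNmem
    have hm1 : (0:ℝ) < ((m + 1 : ℕ) : ℝ) := by positivity
    have hqb := qBound (le_of_lt hX)
    rw [hg'_def]
    rw [Real.norm_eq_abs, abs_mul, abs_mul,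
      abs_of_pos (by positivity : (0:ℝ) < ((m + 1 : ℕ) : ℝ) * δ),
      abs_of_nonneg (ha_nonneg m)]
    calc ((m + 1 : ℕ) : ℝ) * δ *
          |(((m + 1 : ℕ) : ℝ) * N * δ * Real.cos (((m + 1 : ℕ) : ℝ) * N * δ)
            - Real.sin (((m + 1 : ℕ) : ℝ) * N * δ)) /
          ((((m + 1 : ℕ) : ℝ) * N * δ - Real.sin (((m + 1 : ℕ) : ℝ) * N * δ)) ^ 2)| * a m
        ≤ ((m + 1 : ℕ) : ℝ) * δ * (8 / (((m + 1 : ℕ) : ℝ) * N * δ)) * a m := by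
          gcongr
      _ ≤ ((m + 1 : ℕ) : ℝ) * δ * (8 / (((m + 1 : ℕ) : ℝ) * N * δ)) * (1 / ((m:ℝ) + 1) ^ 2) := by
          gcongr
          exact ha_le m
      _ = 8 / N * (1 / ((m:ℝ) + 1) ^ 2) := by
          have hNne : N ≠ 0 := ne_of_gt hN0
          have hδne : δ ≠ 0 := ne_of_gt hδ0
          push_cast
          field_simp
      _ ≤ 8 * δ / π * (1 / ((m:ℝ) + 1) ^ 2) := by
          have h8 : 8 / N ≤ 8 * δ / π := by
            rw [div_le_div_iff₀ hN0 hπ]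
            rw [div_lt_iff₀ hδ0] at hNmem
            nlinarith
          have hnn : (0:ℝ) ≤ 1 / ((m:ℝ) + 1) ^ 2 := by positivity
          exact mul_le_mul_of_nonneg_right h8 hnn
  have hy0mem : (2 * π / δ) ∈ Set.Ioi (π / δ) := by
    rw [Set.mem_Ioi]
    rw [div_lt_div_iff₀ hδ0 hδ0]
    nlinarith
  have hg0 : Summable (fun m => g m (2 * π / δ)) := by
    refine hsuma.congr fun m => ?_
    have hX0 : ((m + 1 : ℕ) : ℝ) * (2 * π / δ) * δ = ((2 * (m + 1) : ℕ) : ℝ) * π := by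
      push_cast; field_simp
    have hXne : ((2 * (m + 1) : ℕ) : ℝ) * π ≠ 0 := by positivity
    rw [hg_def]
    simp only [hX0, Real.sin_nat_mul_pi, sub_zero, div_self hXne, one_mul]
  have hu : Summable (fun m : ℕ => 8 * δ / π * (1 / ((m:ℝ) + 1) ^ 2)) := hsum1.mul_left _
  have hasD : ∀ N ∈ Set.Ioi (π / δ), HasDerivAt (fun z => ∑' m, g m z) (∑' m, g' m N) N :=
    fun N hN => hasDerivAt_tsum_of_isPreconnected hu isOpen_Ioi (isPreconnected_Ioi)
      hgderiv hbound hy0mem hg0 hN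
  have hderivF : ∀ N ∈ Set.Ioi (π / δ), deriv F N = δ ^ 2 / 6 * ∑' m, g' m N := by
    intro N hN
    rw [hFeq]
    exact ((hasD N hN).const_mul (δ ^ 2 / 6)).deriv
  -- evaluation at N₁
  have hkR : (1:ℝ) ≤ (k:ℝ) := by exact_mod_cast hk
  have hN1mem : (2 * (k:ℝ) * π / δ) ∈ Set.Ioi (π / δ) := by
    rw [Set.mem_Ioi, div_lt_div_iff₀ hδ0 hδ0]
    nlinarith [mul_pos hπ hδ0, mul_le_mul_of_nonneg_right hkR (le_of_lt (mul_pos hπ hδ0))]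
  have hval1 : ∀ m : ℕ, g' m (2 * (k:ℝ) * π / δ) = δ / (2 * (k:ℝ) * π) * a m := by
    intro m
    have hX : ((m + 1 : ℕ) : ℝ) * (2 * (k:ℝ) * π / δ) * δ = ((2 * (m + 1) * k : ℕ) : ℝ) * π := by
      push_cast; field_simp
    have hq := qVal (2 * (m + 1) * k) (by positivity)
    have heven : (-1:ℝ) ^ (2 * (m + 1) * k) = 1 := Even.neg_one_pow ⟨(m + 1) * k, by ring⟩
    rw [hg'_def]
    simp only [hX]
    rw [show (((m + 1 : ℕ) : ℝ) * δ) * ((((2 * (m + 1) * k : ℕ) : ℝ) * π *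
        Real.cos (((2 * (m + 1) * k : ℕ) : ℝ) * π) - Real.sin (((2 * (m + 1) * k : ℕ) : ℝ) * π)) /
        ((((2 * (m + 1) * k : ℕ) : ℝ) * π - Real.sin (((2 * (m + 1) * k : ℕ) : ℝ) * π)) ^ 2)) * a m
      = (((m + 1 : ℕ) : ℝ) * δ) * ((-1:ℝ) ^ (2 * (m + 1) * k) / (((2 * (m + 1) * k : ℕ) : ℝ) * π)) * a m
      from by rw [hq], heven]
    have hne : ((m:ℝ) + 1) ≠ 0 := by positivity
    have hkne : (k:ℝ) ≠ 0 := by positivity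
    push_cast
    field_simp
  have hts1 : ∑' m, g' m (2 * (k:ℝ) * π / δ) = δ / (2 * (k:ℝ) * π) * ∑' m, a m := by
    rw [tsum_congr hval1, tsum_mul_left]
  have htsuma_pos : 0 < ∑' m, a m := by
    have h0 : 0 < a 0 := by
      have hs : 0 < Real.sin (π * ω) := by
        apply Real.sin_pos_of_pos_of_lt_pi (by positivity)
        nlinarith
      have : a 0 = Real.sin (π * ω) ^ 2 := by
        rw [ha_def]; norm_num
      rw [this]; exact pow_pos hs 2
    exact Summable.tsum_pos hsuma ha_nonneg 0 h0
  have part1 : 0 < deriv F (2 * (k:ℝ) * π / δ) := by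
    rw [hderivF _ hN1mem, hts1]
    have : 0 < δ / (2 * (k:ℝ) * π) := by positivity
    positivity
  -- evaluation at N₂
  have hN2mem : ((2 * (k:ℝ) + 1) * π / δ) ∈ Set.Ioi (π / δ) := by
    rw [Set.mem_Ioi, div_lt_div_iff₀ hδ0 hδ0]
    nlinarith [mul_pos hπ hδ0, mul_le_mul_of_nonneg_right hkR (le_of_lt (mul_pos hπ hδ0))]
  have hval2 : ∀ m : ℕ, g' m ((2 * (k:ℝ) + 1) * π / δ)
      = δ / ((2 * (k:ℝ) + 1) * π) * ((-1:ℝ) ^ (m + 1) * a m) := by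
    intro m
    have hX : ((m + 1 : ℕ) : ℝ) * ((2 * (k:ℝ) + 1) * π / δ) * δ
        = (((m + 1) * (2 * k + 1) : ℕ) : ℝ) * π := by
      push_cast; field_simp
    have hq := qVal ((m + 1) * (2 * k + 1)) (by positivity)
    have hsg : (-1:ℝ) ^ ((m + 1) * (2 * k + 1)) = (-1:ℝ) ^ (m + 1) := by
      rw [show (m + 1) * (2 * k + 1) = (m + 1) + 2 * ((m + 1) * k) by ring, pow_add, pow_mul]
      norm_num
    rw [hg'_def]
    simp only [hX]
    rw [show (((m + 1 : ℕ) : ℝ) * δ) * (((((m + 1) * (2 * k + 1) : ℕ) : ℝ) * π *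
        Real.cos ((((m + 1) * (2 * k + 1) : ℕ) : ℝ) * π)
          - Real.sin ((((m + 1) * (2 * k + 1) : ℕ) : ℝ) * π)) /
        (((((m + 1) * (2 * k + 1) : ℕ) : ℝ) * π
          - Real.sin ((((m + 1) * (2 * k + 1) : ℕ) : ℝ) * π)) ^ 2)) * a m
      = (((m + 1 : ℕ) : ℝ) * δ) * ((-1:ℝ) ^ (m + 1) / ((((m + 1) * (2 * k + 1) : ℕ) : ℝ) * π)) * a m
      from by rw [hq, hsg]]
    have hne : ((m:ℝ) + 1) ≠ 0 := by positivity
    push_cast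
    field_simp
  have hts2 : ∑' m, g' m ((2 * (k:ℝ) + 1) * π / δ)
      = δ / ((2 * (k:ℝ) + 1) * π) * (-(π * ω) ^ 2 / 2) := by
    rw [tsum_congr hval2, tsum_mul_left]
    congr 1
    exact (keySum' hω0 hω2).tsum_eq
  have hderiv2 : deriv F ((2 * (k:ℝ) + 1) * π / δ)
      = -(δ ^ 2 / (6 * ((2 * (k:ℝ) + 1) * π / δ))) * (π * ω) ^ 2 / 2 := by
    rw [hderivF _ hN2mem, hts2]
    have h1 : (2 * (k:ℝ) + 1) ≠ 0 := by positivity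
    field_simp
  refine ⟨part1, hderiv2, ?_⟩
  rw [hderiv2]
  have hpos : 0 < δ ^ 2 / (6 * ((2 * (k:ℝ) + 1) * π / δ)) * (π * ω) ^ 2 / 2 := by positivity
  linarith
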